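/- Up to graph isomorphism, there exist exactly two graphs of the form obtained from the Heawood graph H by deleting two disjoint edges: there are two non-isomorphic simple graphs A and B on 14 vertices such that every graph H minus {e, f}, where e and f are distinct edges of H with no common endpoint, is isomorphic to A or to B, and both A and B arise in this way. -/

import Mathlib

/-- The Heawood graph: the incidence graph of the Fano plane, on vertex set
`ZMod 7 ⊕ ZMod 7`, where point `Sum.inl p` is adjacent to line `Sum.inr ℓ` if and only if
`ℓ - p ∈ {0, 1, 3}`, and no two points and no two lines are adjacent. -/
def Heawood : SimpleGraph (ZMod 7 ⊕ ZMod 7) :=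
  SimpleGraph.fromRel (fun a b => ∃ p ℓ : ZMod 7,
    a = Sum.inl p ∧ b = Sum.inr ℓ ∧ ℓ - p ∈ ({0, 1, 3} : Set (ZMod 7)))

/-- Two edges (elements of `Sym2 V`) are disjoint if they share no endpoint. -/
def EdgeDisj {V : Type*} (e f : Sym2 V) : Prop := ∀ v : V, v ∈ e → v ∉ f

abbrev HV := ZMod 7 ⊕ ZMod 7

instance tripleSetDec {α : Type*} [DecidableEq α] (a b c : α) :
    DecidablePred (· ∈ ({a, b, c} : Set α)) := fun x =>
  decidable_of_iff (x = a ∨ x = b ∨ x = c) (by simp)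

instance heawoodDec : DecidableRel Heawood.Adj := fun a b =>
  decidable_of_iff (a ≠ b ∧ ((∃ p ℓ : ZMod 7,
      a = Sum.inl p ∧ b = Sum.inr ℓ ∧ ℓ - p ∈ ({0, 1, 3} : Set (ZMod 7))) ∨ (∃ p ℓ : ZMod 7,
      b = Sum.inl p ∧ a = Sum.inr ℓ ∧ ℓ - p ∈ ({0, 1, 3} : Set (ZMod 7)))))
    (by rw [Heawood, SimpleGraph.fromRel_adj])

instance pairSetDec {α : Type*} [DecidableEq α] (a b : α) :
    DecidablePred (· ∈ ({a, b} : Set α)) := fun x =>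
  decidable_of_iff (x = a ∨ x = b) (by simp)

instance delPairDec {V : Type*} [DecidableEq V] (G : SimpleGraph V) [DecidableRel G.Adj]
    (e f : Sym2 V) : DecidableRel (G.deleteEdges {e, f}).Adj := fun a b =>
  decidable_of_iff (G.Adj a b ∧ ¬(s(a, b) = e ∨ s(a, b) = f)) (by
    rw [SimpleGraph.deleteEdges_adj]
    simp [Set.mem_insert_iff])

instance comapDec {V W : Type*} (G : SimpleGraph W) [DecidableRel G.Adj] (f : V → W) :
    DecidableRel (G.comap f).Adj := fun a b => (inferInstance : Decidable (G.Adj (f a) (f b)))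

def db (x : ZMod 7) : Bool := x = 0 || x = 1 || x = 3

def hadjB : HV → HV → Bool
  | Sum.inl p, Sum.inr l => db (l - p)
  | Sum.inr l, Sum.inl p => db (l - p)
  | _, _ => false

lemma heawood_adj_iff : ∀ a b, Heawood.Adj a b ↔ hadjB a b = true := by decide

instance heawoodDecFast : DecidableRel Heawood.Adj := fun a b =>
  decidable_of_iff (hadjB a b = true) (heawood_adj_iff a b).symm

def toIdx : HV → Fin 14 := Sum.elim (Fin.castAdd 7) (Fin.natAdd 7)

def toV : Fin 14 → HV := fun i =>
  if (i : ℕ) < 7 then Sum.inl ((i : ℕ) : ZMod 7) else Sum.inr (((i : ℕ) - 7 : ℕ) : ZMod 7)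

def e0 : Sym2 HV := s(Sum.inl 0, Sum.inr 0)
def fA : Sym2 HV := s(Sum.inl 4, Sum.inr 4)
def fB : Sym2 HV := s(Sum.inl 1, Sum.inr 2)

def GA : SimpleGraph (Fin 14) := (Heawood.deleteEdges {e0, fA}).comap toV
def GB : SimpleGraph (Fin 14) := (Heawood.deleteEdges {e0, fB}).comap toV

instance : DecidableRel GA.Adj := by unfold GA; infer_instance
instance : DecidableRel GB.Adj := by unfold GB; infer_instance

def mkIso {V W : Type*} {G : SimpleGraph V} {G' : SimpleGraph W} (t : V → W) (ti : W → V)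
    (h1 : ∀ v, ti (t v) = v) (h2 : ∀ w, t (ti w) = w)
    (h3 : ∀ a b, G'.Adj (t a) (t b) ↔ G.Adj a b) : G ≃g G' :=
  ⟨⟨t, ti, h1, h2⟩, h3 _ _⟩

def pm (l : List (Fin 14)) : HV → Fin 14 := fun v => (l[((toIdx v : Fin 14) : ℕ)]?).getD 0
def pmi (l : List (Fin 14)) : Fin 14 → HV := fun i => toV ((l[(i : ℕ)]?).getD 0)

lemma case_1_1 : Nonempty ((Heawood.deleteEdges {e0, s(Sum.inl 1, Sum.inr 1)}) ≃g GA) :=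
  ⟨mkIso (pm [7, 11, 13, 9, 8, 12, 10, 0, 4, 3, 6, 1, 5, 2]) (pmi [7, 11, 13, 9, 8, 12, 10, 0, 4, 3, 6, 1, 5, 2]) (by decide) (by decide) (by decide)⟩

lemma case_1_2 : Nonempty ((Heawood.deleteEdges {e0, s(Sum.inl 1, Sum.inr 2)}) ≃g GB) :=
  ⟨mkIso (pm [0, 1, 2, 3, 4, 5, 6, 7, 8, 9, 10, 11, 12, 13]) (pmi [0, 1, 2, 3, 4, 5, 6, 7, 8, 9, 10, 11, 12, 13]) (by decide) (by decide) (by decide)⟩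

lemma case_1_4 : Nonempty ((Heawood.deleteEdges {e0, s(Sum.inl 1, Sum.inr 4)}) ≃g GB) :=
  ⟨mkIso (pm [0, 1, 3, 2, 6, 5, 4, 7, 8, 11, 10, 9, 13, 12]) (pmi [0, 1, 3, 2, 6, 5, 4, 7, 8, 11, 10, 9, 13, 12]) (by decide) (by decide) (by decide)⟩

lemma case_2_2 : Nonempty ((Heawood.deleteEdges {e0, s(Sum.inl 2, Sum.inr 2)}) ≃g GB) :=
  ⟨mkIso (pm [0, 2, 1, 5, 4, 3, 6, 7, 10, 9, 8, 12, 11, 13]) (pmi [0, 2, 1, 5, 4, 3, 6, 7, 10, 9, 8, 12, 11, 13]) (by decide) (by decide) (by decide)⟩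

lemma case_2_3 : Nonempty ((Heawood.deleteEdges {e0, s(Sum.inl 2, Sum.inr 3)}) ≃g GA) :=
  ⟨mkIso (pm [7, 13, 11, 12, 8, 9, 10, 0, 6, 3, 4, 5, 1, 2]) (pmi [7, 12, 13, 9, 10, 11, 8, 0, 4, 5, 6, 2, 3, 1]) (by decide) (by decide) (by decide)⟩

lemma case_2_5 : Nonempty ((Heawood.deleteEdges {e0, s(Sum.inl 2, Sum.inr 5)}) ≃g GB) :=
  ⟨mkIso (pm [0, 3, 1, 5, 6, 2, 4, 7, 10, 11, 8, 13, 9, 12]) (pmi [0, 2, 5, 1, 6, 3, 4, 7, 10, 12, 8, 9, 13, 11]) (by decide) (by decide) (by decide)⟩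

lemma case_3_3 : Nonempty ((Heawood.deleteEdges {e0, s(Sum.inl 3, Sum.inr 3)}) ≃g GA) :=
  ⟨mkIso (pm [7, 13, 12, 11, 10, 9, 8, 0, 6, 5, 4, 3, 2, 1]) (pmi [7, 13, 12, 11, 10, 9, 8, 0, 6, 5, 4, 3, 2, 1]) (by decide) (by decide) (by decide)⟩

lemma case_3_4 : Nonempty ((Heawood.deleteEdges {e0, s(Sum.inl 3, Sum.inr 4)}) ≃g GB) :=
  ⟨mkIso (pm [0, 2, 5, 1, 6, 3, 4, 7, 10, 12, 8, 9, 13, 11]) (pmi [0, 3, 1, 5, 6, 2, 4, 7, 10, 11, 8, 13, 9, 12]) (by decide) (by decide) (by decide)⟩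

lemma case_3_6 : Nonempty ((Heawood.deleteEdges {e0, s(Sum.inl 3, Sum.inr 6)}) ≃g GB) :=
  ⟨mkIso (pm [7, 12, 13, 9, 10, 11, 8, 0, 4, 5, 6, 2, 3, 1]) (pmi [7, 13, 11, 12, 8, 9, 10, 0, 6, 3, 4, 5, 1, 2]) (by decide) (by decide) (by decide)⟩

lemma case_4_4 : Nonempty ((Heawood.deleteEdges {e0, s(Sum.inl 4, Sum.inr 4)}) ≃g GA) :=
  ⟨mkIso (pm [0, 1, 2, 3, 4, 5, 6, 7, 8, 9, 10, 11, 12, 13]) (pmi [0, 1, 2, 3, 4, 5, 6, 7, 8, 9, 10, 11, 12, 13]) (by decide) (by decide) (by decide)⟩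

lemma case_4_5 : Nonempty ((Heawood.deleteEdges {e0, s(Sum.inl 4, Sum.inr 5)}) ≃g GA) :=
  ⟨mkIso (pm [0, 2, 1, 5, 4, 3, 6, 7, 10, 9, 8, 12, 11, 13]) (pmi [0, 2, 1, 5, 4, 3, 6, 7, 10, 9, 8, 12, 11, 13]) (by decide) (by decide) (by decide)⟩

lemma case_5_1 : Nonempty ((Heawood.deleteEdges {e0, s(Sum.inl 5, Sum.inr 1)}) ≃g GA) :=
  ⟨mkIso (pm [7, 12, 13, 9, 10, 11, 8, 0, 4, 5, 6, 2, 3, 1]) (pmi [7, 13, 11, 12, 8, 9, 10, 0, 6, 3, 4, 5, 1, 2]) (by decide) (by decide) (by decide)⟩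

lemma case_5_5 : Nonempty ((Heawood.deleteEdges {e0, s(Sum.inl 5, Sum.inr 5)}) ≃g GB) :=
  ⟨mkIso (pm [7, 13, 11, 12, 8, 9, 10, 0, 6, 3, 4, 5, 1, 2]) (pmi [7, 12, 13, 9, 10, 11, 8, 0, 4, 5, 6, 2, 3, 1]) (by decide) (by decide) (by decide)⟩

lemma case_5_6 : Nonempty ((Heawood.deleteEdges {e0, s(Sum.inl 5, Sum.inr 6)}) ≃g GB) :=
  ⟨mkIso (pm [7, 13, 12, 11, 10, 9, 8, 0, 6, 5, 4, 3, 2, 1]) (pmi [7, 13, 12, 11, 10, 9, 8, 0, 6, 5, 4, 3, 2, 1]) (by decide) (by decide) (by decide)⟩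

lemma case_6_2 : Nonempty ((Heawood.deleteEdges {e0, s(Sum.inl 6, Sum.inr 2)}) ≃g GA) :=
  ⟨mkIso (pm [0, 1, 3, 2, 6, 5, 4, 7, 8, 11, 10, 9, 13, 12]) (pmi [0, 1, 3, 2, 6, 5, 4, 7, 8, 11, 10, 9, 13, 12]) (by decide) (by decide) (by decide)⟩

lemma case_6_6 : Nonempty ((Heawood.deleteEdges {e0, s(Sum.inl 6, Sum.inr 6)}) ≃g GA) :=
  ⟨mkIso (pm [0, 2, 5, 1, 6, 3, 4, 7, 10, 12, 8, 9, 13, 11]) (pmi [0, 3, 1, 5, 6, 2, 4, 7, 10, 11, 8, 13, 9, 12]) (by decide) (by decide) (by decide)⟩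

lemma zc (x : ZMod 7) : x = 0 ∨ x = 1 ∨ x = 2 ∨ x = 3 ∨ x = 4 ∨ x = 5 ∨ x = 6 := by
  revert x; decide

lemma main16 (P L : ZMod 7) (hD : Heawood.Adj (Sum.inl P) (Sum.inr L)) (hP : P ≠ 0) (hL : L ≠ 0) :
    Nonempty ((Heawood.deleteEdges {e0, s(Sum.inl P, Sum.inr L)}) ≃g GA) ∨
    Nonempty ((Heawood.deleteEdges {e0, s(Sum.inl P, Sum.inr L)}) ≃g GB) := by
  rcases zc P with rfl|rfl|rfl|rfl|rfl|rfl|rfl <;> [exact absurd rfl hP; skip; skip; skip; skip; skip; skip] <;>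
    (rcases zc L with rfl|rfl|rfl|rfl|rfl|rfl|rfl <;> [exact absurd rfl hL; skip; skip; skip; skip; skip; skip])
  · exact Or.inl case_1_1
  · exact Or.inr case_1_2
  · exact absurd hD (by decide)
  · exact Or.inr case_1_4
  · exact absurd hD (by decide)
  · exact absurd hD (by decide)
  · exact absurd hD (by decide)
  · exact Or.inr case_2_2
  · exact Or.inl case_2_3
  · exact absurd hD (by decide)
  · exact Or.inr case_2_5
  · exact absurd hD (by decide)
  · exact absurd hD (by decide)
  · exact absurd hD (by decide)
  · exact Or.inl case_3_3
  · exact Or.inr case_3_4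
  · exact absurd hD (by decide)
  · exact Or.inr case_3_6
  · exact absurd hD (by decide)
  · exact absurd hD (by decide)
  · exact absurd hD (by decide)
  · exact Or.inl case_4_4
  · exact Or.inl case_4_5
  · exact absurd hD (by decide)
  · exact Or.inl case_5_1
  · exact absurd hD (by decide)
  · exact absurd hD (by decide)
  · exact absurd hD (by decide)
  · exact Or.inr case_5_5
  · exact Or.inr case_5_6
  · exact absurd hD (by decide)
  · exact Or.inl case_6_2
  · exact absurd hD (by decide)
  · exact absurd hD (by decide)
  · exact absurd hD (by decide)
  · exact Or.inl case_6_6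

-- the three automorphism families
def a1f (t : ZMod 7) : HV → HV := Sum.map (· + t) (· + t)
def a2f (p : ZMod 7) : HV → HV := Sum.map (fun q => 2*q - 2*p) (fun q => 2*q - 2*p + 1)
def a4f (p : ZMod 7) : HV → HV := Sum.map (fun q => 4*q - 4*p) (fun q => 4*q - 4*p + 3)

def aut1 (t : ZMod 7) : Heawood ≃g Heawood :=
  mkIso (a1f t) (a1f (-t))
    ((by decide : ∀ t v, a1f (-t) (a1f t v) = v) t)
    ((by decide : ∀ t v, a1f t (a1f (-t) v) = v) t)
    ((by decide : ∀ t a b, Heawood.Adj (a1f t a) (a1f t b) ↔ Heawood.Adj a b) t)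

def a2i (p : ZMod 7) : HV → HV := Sum.map (fun q => 4*q + p) (fun q => 4*q + p + 3)
def a4i (p : ZMod 7) : HV → HV := Sum.map (fun q => 2*q + p) (fun q => 2*q + p + 1)

def aut2 (p : ZMod 7) : Heawood ≃g Heawood :=
  mkIso (a2f p) (a2i p)
    ((by decide : ∀ p v, a2i p (a2f p v) = v) p)
    ((by decide : ∀ p v, a2f p (a2i p v) = v) p)
    ((by decide : ∀ p a b, Heawood.Adj (a2f p a) (a2f p b) ↔ Heawood.Adj a b) p)

def aut4 (p : ZMod 7) : Heawood ≃g Heawood :=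
  mkIso (a4f p) (a4i p)
    ((by decide : ∀ p v, a4i p (a4f p v) = v) p)
    ((by decide : ∀ p v, a4f p (a4i p v) = v) p)
    ((by decide : ∀ p a b, Heawood.Adj (a4f p a) (a4f p b) ↔ Heawood.Adj a b) p)

lemma edgeDisj_pairs {α : Type*} (a b c d : α) (h : a ≠ c ∧ a ≠ d ∧ b ≠ c ∧ b ≠ d) :
    EdgeDisj s(a, b) s(c, d) := by
  intro v hv hv'
  rw [Sym2.mem_iff] at hv hv'
  obtain ⟨h1, h2, h3, h4⟩ := h
  rcases hv with rfl | rfl <;> rcases hv' with rfl | rfl <;> simp_all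

lemma deleteEdges_iso {V W : Type*} {G : SimpleGraph V} {G' : SimpleGraph W} (φ : G ≃g G')
    (e f : Sym2 V) :
    Nonempty (G.deleteEdges {e, f} ≃g G'.deleteEdges {Sym2.map φ e, Sym2.map φ f}) := by
  refine ⟨⟨φ.toEquiv, ?_⟩⟩
  intro a b
  simp only [SimpleGraph.deleteEdges_adj, Set.mem_insert_iff, Set.mem_singleton_iff]
  rw [show ⇑φ.toEquiv = ⇑φ from rfl]
  rw [show s(φ a, φ b) = Sym2.map φ s(a, b) from (Sym2.map_pair_eq _ _ _).symm,
    (Sym2.map.injective φ.injective).eq_iff, (Sym2.map.injective φ.injective).eq_iff,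
    φ.map_adj_iff]

lemma edge_form (e : Sym2 HV) (he : e ∈ Heawood.edgeSet) :
    ∃ p l : ZMod 7, e = s(Sum.inl p, Sum.inr l) := by
  induction e using Sym2.ind with
  | _ a b =>
    rw [SimpleGraph.mem_edgeSet, heawood_adj_iff] at he
    rcases a with p | l <;> rcases b with p' | l'
    · simp [hadjB] at he
    · exact ⟨p, l', rfl⟩
    · exact ⟨p', l, Sym2.eq_swap⟩
    · simp [hadjB] at he

lemma iso_degree {V W : Type*} [Fintype V] [Fintype W] {G : SimpleGraph V} {G' : SimpleGraph W}
    [DecidableRel G.Adj] [DecidableRel G'.Adj] (φ : G ≃g G') (v : V) :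
    G'.degree (φ v) = G.degree v := by
  rw [← SimpleGraph.card_neighborSet_eq_degree, ← SimpleGraph.card_neighborSet_eq_degree]
  exact (Fintype.card_congr (φ.mapNeighborSet v)).symm

lemma not_iso_AB : ¬ Nonempty (GA ≃g GB) := by
  rintro ⟨φ⟩
  have h1 : GA.Adj 4 7 := by decide
  have h2 : GB.Adj (φ 4) (φ 7) := φ.map_adj_iff.mpr h1
  have d1 : GB.degree (φ 4) = 2 := by rw [iso_degree φ 4]; decide
  have d2 : GB.degree (φ 7) = 2 := by rw [iso_degree φ 7]; decide
  exact (by decide : ∀ u v : Fin 14, ¬(GB.Adj u v ∧ GB.degree u = 2 ∧ GB.degree v = 2))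
    (φ 4) (φ 7) ⟨h2, d1, d2⟩

/-- Up to isomorphism, there are exactly two graphs obtained from the Heawood graph by deleting
two disjoint edges. -/
theorem heawood_delete_two_disjoint_edges :
    ∃ A B : SimpleGraph (Fin 14),
      ¬ Nonempty (A ≃g B) ∧
      (∀ e ∈ Heawood.edgeSet, ∀ f ∈ Heawood.edgeSet, EdgeDisj e f →
        Nonempty (Heawood.deleteEdges {e, f} ≃g A) ∨
        Nonempty (Heawood.deleteEdges {e, f} ≃g B)) ∧
      (∃ e ∈ Heawood.edgeSet, ∃ f ∈ Heawood.edgeSet, EdgeDisj e f ∧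
        Nonempty (Heawood.deleteEdges {e, f} ≃g A)) ∧
      (∃ e ∈ Heawood.edgeSet, ∃ f ∈ Heawood.edgeSet, EdgeDisj e f ∧
        Nonempty (Heawood.deleteEdges {e, f} ≃g B)) := by
  refine ⟨GA, GB, not_iso_AB, ?_, ?_, ?_⟩
  · intro e he f hf hdisj
    obtain ⟨p1, l1, rfl⟩ := edge_form e he
    obtain ⟨p2, l2, rfl⟩ := edge_form f hf
    rw [SimpleGraph.mem_edgeSet] at he hf
    have hd1 : l1 - p1 = 0 ∨ l1 - p1 = 1 ∨ l1 - p1 = 3 :=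
      (by decide : ∀ p l : ZMod 7, Heawood.Adj (Sum.inl p) (Sum.inr l) →
        (l - p = 0 ∨ l - p = 1 ∨ l - p = 3)) p1 l1 he
    have hp12 : p1 ≠ p2 := by
      intro h
      exact hdisj (Sum.inl p1) (by simp [Sym2.mem_iff]) (by simp [Sym2.mem_iff, h])
    have hl12 : l1 ≠ l2 := by
      intro h
      exact hdisj (Sum.inr l1) (by simp [Sym2.mem_iff]) (by simp [Sym2.mem_iff, h])
    -- choose the automorphism
    obtain ⟨φ, h1, h2, h3, h4⟩ : ∃ φ : Heawood ≃g Heawood,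
        φ (Sum.inl p1) = Sum.inl 0 ∧ φ (Sum.inr l1) = Sum.inr 0 ∧
        (∀ q, ∃ P, φ (Sum.inl q) = Sum.inl P) ∧ (∀ q, ∃ L, φ (Sum.inr q) = Sum.inr L) := by
      rcases hd1 with hd | hd | hd
      · refine ⟨aut1 (-p1), (by decide : ∀ p : ZMod 7, a1f (-p) (Sum.inl p) = Sum.inl 0) p1, ?_,
          fun q => ⟨_, rfl⟩, fun q => ⟨_, rfl⟩⟩
        have h : l1 = p1 := by rwa [sub_eq_zero] at hd
        rw [h]
        exact (by decide : ∀ p : ZMod 7, a1f (-p) (Sum.inr p) = Sum.inr 0) p1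
      · refine ⟨aut4 p1, (by decide : ∀ p : ZMod 7, a4f p (Sum.inl p) = Sum.inl 0) p1, ?_,
          fun q => ⟨_, rfl⟩, fun q => ⟨_, rfl⟩⟩
        have h : l1 = 1 + p1 := by rwa [sub_eq_iff_eq_add] at hd
        rw [h]
        exact (by decide : ∀ p : ZMod 7, a4f p (Sum.inr (1 + p)) = Sum.inr 0) p1
      · refine ⟨aut2 p1, (by decide : ∀ p : ZMod 7, a2f p (Sum.inl p) = Sum.inl 0) p1, ?_,
          fun q => ⟨_, rfl⟩, fun q => ⟨_, rfl⟩⟩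
        have h : l1 = 3 + p1 := by rwa [sub_eq_iff_eq_add] at hd
        rw [h]
        exact (by decide : ∀ p : ZMod 7, a2f p (Sum.inr (3 + p)) = Sum.inr 0) p1
    obtain ⟨P, hP⟩ := h3 p2
    obtain ⟨L, hL⟩ := h4 l2
    have hAdjPL : Heawood.Adj (Sum.inl P) (Sum.inr L) := by
      rw [← hP, ← hL]; exact φ.map_adj_iff.mpr hf
    have hPne : P ≠ 0 := by
      rintro rfl
      exact hp12 (Sum.inl.inj (φ.injective (hP.trans h1.symm)).symm)
    have hLne : L ≠ 0 := by
      rintro rfl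
      exact hl12 (Sum.inr.inj (φ.injective (hL.trans h2.symm)).symm)
    have key := main16 P L hAdjPL hPne hLne
    obtain ⟨ψ⟩ := deleteEdges_iso φ s(Sum.inl p1, Sum.inr l1) s(Sum.inl p2, Sum.inr l2)
    have hmap1 : Sym2.map φ s(Sum.inl p1, Sum.inr l1) = e0 := by
      rw [Sym2.map_pair_eq, h1, h2]; rfl
    have hmap2 : Sym2.map φ s(Sum.inl p2, Sum.inr l2) = s(Sum.inl P, Sum.inr L) := by
      rw [Sym2.map_pair_eq, hP, hL]
    rw [hmap1, hmap2] at ψ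
    exact key.imp (fun ⟨j⟩ => ⟨ψ.trans j⟩) (fun ⟨j⟩ => ⟨ψ.trans j⟩)
  · exact ⟨e0, Heawood.mem_edgeSet.mpr (by decide), fA,
      Heawood.mem_edgeSet.mpr (by decide), edgeDisj_pairs _ _ _ _ (by decide), case_4_4⟩
  · exact ⟨e0, Heawood.mem_edgeSet.mpr (by decide), fB,
      Heawood.mem_edgeSet.mpr (by decide), edgeDisj_pairs _ _ _ _ (by decide), case_1_2⟩
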